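/- With the same setup, for C sufficiently large and a_k < x ≤ s_k = 10a_k one has x·f'(x)/f(x) ≥ 1 - ∑_{j=k+1}^∞ s_k/(a_j - s_k) ≥ 1/2. -/

import Mathlib

open Complex Finset

private lemma aux_logfrac (x c : ℂ) (hc : c ≠ 0) (hxc : x - c ≠ 0) (h2 : 1 - x/c ≠ 0) :
    x * (-(1/c)/(1 - x/c)) = x/(x-c) := by
  have hxc' : -x + c ≠ 0 := by intro h; apply hxc; linear_combination -h
  field_simp
  linear_combination x * mul_inv_cancel₀ hxc'

private lemma aux_ratio (xx A y : ℝ) (hx : 0 < xx) (hxA : xx ≤ 10*A) (hy10 : 10*A < y) :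
    -(10*A/(y - 10*A)) ≤ xx/(xx - y) := by
  have h2 : 0 < y - xx := by linarith
  have h3 : 0 < y - 10*A := by linarith
  have key : xx/(y - xx) ≤ 10*A/(y - 10*A) := by
    rw [div_le_div_iff₀ h2 h3]
    nlinarith
  have h4 : xx/(xx - y) = -(xx/(y - xx)) := by
    rw [show xx - y = -(y - xx) by ring, div_neg]
  rw [h4]
  linarith

/-- With the main construction, for C sufficiently large, k ≥ 1 and real x with
a_k < x ≤ s_k = 10a_k one has x·f'(x)/f(x) ≥ 1 - ∑_{j≥k+1} s_k/(a_j - s_k) ≥ 1/2. -/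
theorem stmt14 : ∃ C0 : ℝ, ∀ C : ℝ, C0 ≤ C →
    ∀ a : ℕ → ℝ, (∀ k : ℕ, 1 ≤ k → 0 < a k) → a 1 = 1 →
    (∀ k : ℕ, 1 ≤ k → a (k+1) = 8 * C * a k * ∏ j ∈ Finset.Icc 1 (k-1), (a k / a j)) →
    ∀ f : ℂ → ℂ, (∀ z, f z = C * z * ∏' i : ℕ, (1 - z / (a (i+1) : ℂ))) →
    ∀ k : ℕ, 1 ≤ k → ∀ x : ℝ, a k < x → x ≤ 10 * a k →
      (1 - ∑' j : ℕ, 10 * a k / (a (k+1+j) - 10 * a k) ≤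
        ((x : ℂ) * deriv f (x : ℂ) / f (x : ℂ)).re) ∧
      (1 / 2 : ℝ) ≤ 1 - ∑' j : ℕ, 10 * a k / (a (k+1+j) - 10 * a k) := by
  refine ⟨100, ?_⟩
  intro C hC a hapos ha1 harec f hf k hk x hax hxs
  have hA : 0 < a k := hapos k hk
  -- monotonicity
  have hprodge1 : ∀ n, 1 ≤ n → (∀ i, 1 ≤ i → i ≤ n → a i ≤ a n) →
      (1:ℝ) ≤ ∏ j ∈ Finset.Icc 1 (n-1), (a n / a j) := by
    intro n hn hmn
    have h : ∀ i ∈ Finset.Icc 1 (n-1), (1:ℝ) ≤ a n / a i := by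
      intro i hi
      rw [Finset.mem_Icc] at hi
      have h1 : 0 < a i := hapos i hi.1
      rw [le_div_iff₀ h1, one_mul]
      exact hmn i hi.1 (le_trans hi.2 (Nat.sub_le n 1))
    have := Finset.prod_le_prod (fun i _ => zero_le_one) h
    simpa using this
  have hmono : ∀ n, ∀ i, 1 ≤ i → i ≤ n → a i ≤ a n := by
    intro n
    induction n with
    | zero => intro i h1 h2; omega
    | succ m ih =>
      intro i h1 h2
      rcases Nat.lt_or_ge i (m+1) with h | h
      · have hm1 : 1 ≤ m := by omega
        have hstep : a m ≤ a (m+1) := by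
          rw [harec m hm1]
          have hp := hprodge1 m hm1 ih
          have ham := hapos m hm1
          have h8 : (0:ℝ) ≤ 8*C*a m := le_of_lt (mul_pos (by linarith) ham)
          nlinarith [mul_le_mul_of_nonneg_left hp h8]
        exact le_trans (ih i h1 (by omega)) hstep
      · have : i = m+1 := by omega
        simp [this]
  have hgrow : ∀ n, 1 ≤ n → 8 * C * a n ≤ a (n+1) := by
    intro n hn
    rw [harec n hn]
    have hp := hprodge1 n hn (hmono n)
    have han := hapos n hn
    have h8 : (0:ℝ) ≤ 8*C*a n := le_of_lt (mul_pos (by linarith) han)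
    nlinarith [mul_le_mul_of_nonneg_left hp h8]
  have hc : ∀ i : ℕ, 2^i * (800 * a k) ≤ a (k+1+i) := by
    intro i
    induction i with
    | zero =>
      simpa using le_trans (by nlinarith) (hgrow k hk)
    | succ m ih =>
      have h1 : 1 ≤ k+1+m := by omega
      have h2 := hgrow (k+1+m) h1
      have h3 : 0 < a (k+1+m) := hapos _ h1
      have : (2:ℝ) * a (k+1+m) ≤ a (k+1+m+1) := by nlinarith
      calc (2:ℝ)^(m+1) * (800 * a k) = 2 * (2^m * (800 * a k)) := by ring
      _ ≤ 2 * a (k+1+m) := by nlinarith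
      _ ≤ a (k+1+m+1) := this
  have hcpos : ∀ i : ℕ, 0 < a (k+1+i) := fun i => hapos _ (by omega)
  have hc10 : ∀ i : ℕ, 10 * a k < a (k+1+i) := by
    intro i
    have := hc i
    have h2 : (1:ℝ) ≤ 2^i := one_le_pow₀ (by norm_num)
    nlinarith
  have hcd : ∀ i : ℕ, 790 * 2^i * a k ≤ a (k+1+i) - 10 * a k := by
    intro i
    have := hc i
    have h2 : (1:ℝ) ≤ 2^i := one_le_pow₀ (by norm_num)
    nlinarith
  -- tail sum bound
  set t : ℕ → ℝ := fun j => 10 * a k / (a (k+1+j) - 10 * a k) with ht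
  have ht0 : ∀ j, 0 ≤ t j := by
    intro j
    apply div_nonneg (by nlinarith)
    nlinarith [hc10 j]
  have htv : ∀ j, t j ≤ (1/79) * (1/2)^j := by
    intro j
    have hd := hcd j
    have h2 : (0:ℝ) < 2^j := by positivity
    have hdpos : (0:ℝ) < a (k+1+j) - 10 * a k := by nlinarith [hc10 j]
    rw [ht]
    simp only
    rw [div_le_iff₀ hdpos]
    have : ((1:ℝ)/79) * (1/2)^j * (790 * 2^j * a k) ≤ (1/79) * (1/2)^j * (a (k+1+j) - 10*a k) := by
      apply mul_le_mul_of_nonneg_left hd (by positivity)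
    calc (10:ℝ) * a k = (1/79) * (1/2)^j * (790 * 2^j * a k) := by
          field_simp
          have hp2 : ((1:ℝ)/2)^j * 2^j = 1 := by rw [← mul_pow]; norm_num
          linear_combination (-790) * hp2
    _ ≤ _ := this
  have hvsum : Summable (fun j : ℕ => (1/79 : ℝ) * (1/2)^j) :=
    (summable_geometric_of_lt_one (by norm_num) (by norm_num)).mul_left _
  have hts : Summable t := Summable.of_nonneg_of_le ht0 htv hvsum
  have htsum : ∑' j, t j ≤ 1/2 := by
    have h1 : ∑' j, t j ≤ ∑' j, (1/79 : ℝ) * (1/2)^j := Summable.tsum_le_tsum htv hts hvsum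
    have h2 : ∑' j : ℕ, (1/79 : ℝ) * (1/2)^j = (1/79) * 2 := by
      rw [tsum_mul_left, tsum_geometric_of_lt_one (by norm_num) (by norm_num)]
      norm_num
    rw [h2] at h1
    linarith
  refine ⟨?_, by linarith⟩
  -- Analytic part
  set c : ℕ → ℝ := fun i => a (k+1+i) with hcdef
  set M : ℝ := 11 * a k with hMdef
  have hMpos : 0 < M := by rw [hMdef]; nlinarith
  set U : Set ℂ := Metric.ball (0:ℂ) M with hUdef
  have hUopen : IsOpen U := Metric.isOpen_ball
  have hxpos : (0:ℝ) < x := lt_trans hA hax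
  have hxU : (x:ℂ) ∈ U := by
    rw [hUdef, Metric.mem_ball, dist_zero_right, Complex.norm_real, Real.norm_eq_abs,
      abs_of_pos hxpos, hMdef]
    nlinarith
  have hcne : ∀ i, ((c i : ℝ) : ℂ) ≠ 0 := by
    intro i
    exact_mod_cast ne_of_gt (hcpos i)
  have hsmall : ∀ i, ∀ z ∈ U, ‖z / ((c i : ℝ) : ℂ)‖ ≤ (1/2)^i * (1/2) := by
    intro i z hz
    rw [hUdef, Metric.mem_ball, dist_zero_right] at hz
    rw [norm_div, Complex.norm_real, Real.norm_eq_abs, abs_of_pos (hcpos i),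
      div_le_iff₀ (hcpos i)]
    have hpow : ((1:ℝ)/2)^i * 2^i = 1 := by
      rw [← mul_pow]; norm_num
    have h1 : (0:ℝ) ≤ (1/2:ℝ)^i * (1/2) := by positivity
    have h2 := mul_le_mul_of_nonneg_left (hc i) h1
    nlinarith [hz, hMpos]
  have hsmall2 : ∀ i, ∀ z ∈ U, ‖z / ((c i : ℝ) : ℂ)‖ ≤ 1/2 := by
    intro i z hz
    have h1 : ((1:ℝ)/2)^i ≤ 1 := pow_le_one₀ (by norm_num) (by norm_num)
    have := hsmall i z hz
    nlinarith
  have hne1 : ∀ i, ∀ z ∈ U, (1 : ℂ) - z / ((c i : ℝ) : ℂ) ≠ 0 := by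
    intro i z hz h0
    rw [sub_eq_zero] at h0
    have := hsmall2 i z hz
    rw [← h0, norm_one] at this
    norm_num at this
  have hslit : ∀ i, ∀ z ∈ U, (1 : ℂ) - z / ((c i : ℝ) : ℂ) ∈ Complex.slitPlane := by
    intro i z hz
    rw [Complex.mem_slitPlane_iff]
    left
    have h1 : (z / ((c i : ℝ) : ℂ)).re ≤ ‖z / ((c i : ℝ) : ℂ)‖ := Complex.re_le_norm _
    have h2 := hsmall2 i z hz
    simp only [Complex.sub_re, Complex.one_re]
    linarith
  set F : ℕ → ℂ → ℂ := fun i z => Complex.log (1 - z / ((c i : ℝ) : ℂ)) with hFdef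
  set u : ℕ → ℝ := fun i => (3/4) * (1/2)^i with hudef
  have hu : Summable u :=
    (summable_geometric_of_lt_one (by norm_num) (by norm_num)).mul_left _
  have hF_le : ∀ i, ∀ z ∈ U, ‖F i z‖ ≤ u i := by
    intro i z hz
    have h0 : F i z = Complex.log (1 + -(z / ((c i : ℝ) : ℂ))) := by
      rw [hFdef]; simp [sub_eq_add_neg]
    rw [h0]
    have h1 : ‖-(z / ((c i : ℝ) : ℂ))‖ ≤ 1/2 := by
      rw [norm_neg]; exact hsmall2 i z hz
    refine le_trans (Complex.norm_log_one_add_half_le_self h1) ?_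
    rw [norm_neg, hudef]
    have := hsmall i z hz
    simp only
    nlinarith
  have hFdiff : ∀ i, DifferentiableOn ℂ (F i) U := by
    intro i z hz
    apply DifferentiableAt.differentiableWithinAt
    apply DifferentiableAt.clog
    · fun_prop
    · exact hslit i z hz
  have hlogsum : ∀ z ∈ U, Summable fun i => F i z := fun z hz =>
    Summable.of_norm_bounded hu (fun i => hF_le i z hz)
  set gL : ℂ → ℂ := fun w => ∑' i, F i w with hgLdef
  have hp : ∀ z ∈ U, HasProd (fun i => (1:ℂ) - z / ((c i : ℝ) : ℂ)) (Complex.exp (gL z)) := by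
    intro z hz
    have h2 := ((hlogsum z hz).hasSum).cexp
    have h3 : (Complex.exp ∘ fun i => F i z) = fun i => (1:ℂ) - z / ((c i : ℝ) : ℂ) := by
      funext i
      simp only [Function.comp_apply, hFdef]
      exact Complex.exp_log (hne1 i z hz)
    rw [h3] at h2
    exact h2
  set H : ℂ → ℂ := fun z => ∏ i ∈ Finset.range k, (1 - z / ((a (i+1) : ℝ) : ℂ)) with hHdef
  set FF : ℂ → ℂ := fun z => ((C:ℂ) * (z * H z)) * Complex.exp (gL z) with hFFdef
  have heq : Set.EqOn f FF U := by
    intro z hz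
    rw [hf z, hFFdef]
    have hshift : (fun n : ℕ => (1 : ℂ) - z/((a (n+k+1) : ℝ):ℂ)) =
        fun n : ℕ => (1:ℂ) - z/((c n : ℝ):ℂ) := by
      funext n
      rw [hcdef]
      simp only
      rw [show n+k+1 = k+1+n by omega]
    have hmul : Multipliable (fun n : ℕ => (1:ℂ) - z/((a (n+k+1) : ℝ):ℂ)) := by
      rw [hshift]; exact (hp z hz).multipliable
    have hsplit := Multipliable.prod_mul_tprod_nat_mul'
      (f := fun i : ℕ => (1:ℂ) - z/((a (i+1) : ℝ):ℂ)) (k := k) hmul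
    have htail : (∏' i : ℕ, ((1:ℂ) - z/((a (i+k+1) : ℝ):ℂ))) = Complex.exp (gL z) := by
      have := (hp z hz).tprod_eq
      rw [← this]
      exact congrArg tprod hshift
    rw [← hsplit, htail, hHdef]
    ring
  have hfx : f (x:ℂ) = FF (x:ℂ) := heq hxU
  have hdf : deriv f (x:ℂ) = deriv FF (x:ℂ) := by
    apply Filter.EventuallyEq.deriv_eq
    exact Filter.eventuallyEq_of_mem (hUopen.mem_nhds hxU) heq
  have hgdOn : DifferentiableOn ℂ gL U :=
    Complex.differentiableOn_tsum_of_summable_norm hu hFdiff hUopen hF_le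
  have hgAt : DifferentiableAt ℂ gL (x:ℂ) :=
    (hgdOn (x:ℂ) hxU).differentiableAt (hUopen.mem_nhds hxU)
  have hHd : DifferentiableAt ℂ H (x:ℂ) := by
    rw [hHdef]
    apply DifferentiableAt.fun_finsetProd
    intro i _
    fun_prop
  have hx0 : ((x:ℝ):ℂ) ≠ 0 := by exact_mod_cast ne_of_gt hxpos
  have hC0' : ((C:ℝ):ℂ) ≠ 0 := by
    have : (0:ℝ) < C := by linarith
    exact_mod_cast ne_of_gt this
  have hhead_lt : ∀ i, i < k → a (i+1) < x := fun i hi =>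
    lt_of_le_of_lt (hmono k (i+1) (by omega) (by omega)) hax
  have hhead_pos : ∀ i, i < k → (0:ℝ) < a (i+1) := fun i hi => hapos (i+1) (by omega)
  have hfac_ne : ∀ i, i < k → (1:ℂ) - (x:ℂ)/((a (i+1) : ℝ):ℂ) ≠ 0 := by
    intro i hi
    have h1 : ((1:ℝ) - x / a (i+1)) < 0 := by
      rw [sub_neg]
      rw [lt_div_iff₀ (hhead_pos i hi), one_mul]
      exact hhead_lt i hi
    have h2 : ((1:ℂ) - (x:ℂ)/((a (i+1) : ℝ):ℂ)) = (((1:ℝ) - x / a (i+1) : ℝ) : ℂ) := by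
      push_cast; ring
    rw [h2]
    exact_mod_cast ne_of_lt h1
  have hH0 : H (x:ℂ) ≠ 0 := by
    rw [hHdef]
    simp only
    rw [Finset.prod_ne_zero_iff]
    intro i hi
    exact hfac_ne i (Finset.mem_range.mp hi)
  -- derivative of each tail log factor
  have hFderiv : ∀ i, HasDerivAt (F i) (-(1/((c i:ℝ):ℂ)) / (1 - (x:ℂ)/((c i:ℝ):ℂ))) (x:ℂ) := by
    intro i
    have h1 : HasDerivAt (fun z : ℂ => 1 - z/((c i:ℝ):ℂ)) (-(1/((c i:ℝ):ℂ))) (x:ℂ) := by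
      have := ((hasDerivAt_id ((x:ℝ):ℂ)).div_const ((c i:ℝ):ℂ)).const_sub 1
      simpa using this
    have := h1.clog (hslit i (x:ℂ) hxU)
    rw [hFdef]
    simpa using this
  have hds : HasSum (fun i => deriv (F i) (x:ℂ)) (deriv gL (x:ℂ)) := by
    rw [hgLdef]
    exact Complex.hasSum_deriv_of_summable_norm hu hFdiff hUopen hF_le hxU
  have hcx : ∀ i, x < c i := fun i => lt_of_le_of_lt hxs (hc10 i)
  have htailterm : ∀ i, (x:ℂ) * deriv (F i) (x:ℂ) = (((x/(x - c i)) : ℝ) : ℂ) := by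
    intro i
    rw [(hFderiv i).deriv]
    have h1 : ((c i:ℝ):ℂ) ≠ 0 := hcne i
    have h2 : (1:ℂ) - (x:ℂ)/((c i:ℝ):ℂ) ≠ 0 := hne1 i (x:ℂ) hxU
    have h3 : ((x:ℝ):ℂ) - ((c i:ℝ):ℂ) ≠ 0 := by
      rw [sub_ne_zero]
      exact_mod_cast ne_of_lt (hcx i)
    push_cast
    exact aux_logfrac _ _ h1 h3 h2
  have hsum_tail : HasSum (fun i => x/(x - c i)) (((x:ℂ) * deriv gL (x:ℂ)).re) := by
    have hh := hds.mul_left (x:ℂ)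
    have hfe : (fun i => (x:ℂ) * deriv (F i) (x:ℂ)) =
        fun i => (((x/(x - c i)) : ℝ) : ℂ) := funext htailterm
    rw [hfe] at hh
    have h5 := Complex.hasSum_re hh
    simp only [Complex.ofReal_re] at h5
    exact h5
  -- logDeriv computation
  have hE0 : Complex.exp (gL (x:ℂ)) ≠ 0 := Complex.exp_ne_zero _
  have hEd : DifferentiableAt ℂ (fun z => Complex.exp (gL z)) (x:ℂ) := hgAt.cexp
  have hPd : DifferentiableAt ℂ (fun z : ℂ => (C:ℂ)*(z*H z)) (x:ℂ) :=
    ((differentiableAt_fun_id.mul hHd)).const_mul _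
  have hP0 : (C:ℂ) * ((x:ℂ) * H (x:ℂ)) ≠ 0 := mul_ne_zero hC0' (mul_ne_zero hx0 hH0)
  have h2 : logDeriv FF (x:ℂ) = logDeriv (fun z : ℂ => (C:ℂ)*(z*H z)) (x:ℂ) +
      logDeriv (fun z => Complex.exp (gL z)) (x:ℂ) := by
    rw [hFFdef]
    exact logDeriv_mul (x:ℂ) hP0 hE0 hPd hEd
  have h3 : logDeriv (fun z : ℂ => (C:ℂ)*(z*H z)) (x:ℂ) = logDeriv (fun z : ℂ => z*H z) (x:ℂ) :=
    logDeriv_const_mul _ _ hC0'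
  have h4 : logDeriv (fun z : ℂ => z * H z) (x:ℂ) =
      logDeriv (fun z : ℂ => z) (x:ℂ) + logDeriv H (x:ℂ) :=
    logDeriv_mul (x:ℂ) hx0 hH0 differentiableAt_fun_id hHd
  have h5 : logDeriv H (x:ℂ) =
      ∑ i ∈ Finset.range k, logDeriv (fun z : ℂ => 1 - z/((a (i+1) : ℝ):ℂ)) (x:ℂ) := by
    rw [hHdef]
    exact logDeriv_prod (fun i hi => hfac_ne i (Finset.mem_range.mp hi))
      (fun i hi => by fun_prop)
  have h6 : logDeriv (fun z => Complex.exp (gL z)) (x:ℂ) = deriv gL (x:ℂ) := by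
    have hd := (hgAt.hasDerivAt).cexp
    rw [logDeriv_apply, hd.deriv]
    exact mul_div_cancel_left₀ _ hE0
  have hheadterm : ∀ i, i < k → (x:ℂ) * logDeriv (fun z : ℂ => 1 - z/((a (i+1) : ℝ):ℂ)) (x:ℂ)
      = (((x/(x - a (i+1))) : ℝ) : ℂ) := by
    intro i hi
    have hdz : HasDerivAt (fun z : ℂ => 1 - z/((a (i+1):ℝ):ℂ)) (-(1/((a (i+1):ℝ):ℂ))) (x:ℂ) := by
      have := ((hasDerivAt_id ((x:ℝ):ℂ)).div_const ((a (i+1):ℝ):ℂ)).const_sub 1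
      simpa using this
    have h1 : ((a (i+1):ℝ):ℂ) ≠ 0 := by exact_mod_cast ne_of_gt (hhead_pos i hi)
    have h2 : (1:ℂ) - (x:ℂ)/((a (i+1):ℝ):ℂ) ≠ 0 := hfac_ne i hi
    have h3 : ((x:ℝ):ℂ) - ((a (i+1):ℝ):ℂ) ≠ 0 := by
      rw [sub_ne_zero]
      exact_mod_cast ne_of_gt (hhead_lt i hi)
    have h5 : logDeriv (fun z : ℂ => 1 - z/((a (i+1):ℝ):ℂ)) (x:ℂ) =
        -(1/((a (i+1):ℝ):ℂ)) / (1 - (x:ℂ)/((a (i+1):ℝ):ℂ)) := by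
      rw [logDeriv_apply, hdz.deriv]
    rw [h5]
    push_cast
    exact aux_logfrac _ _ h1 h3 h2
  have hmain : (x:ℂ) * deriv f (x:ℂ) / f (x:ℂ) =
      1 + ((∑ i ∈ Finset.range k, x/(x - a (i+1)) : ℝ) : ℂ) + (x:ℂ) * deriv gL (x:ℂ) := by
    have h1 : (x:ℂ) * deriv f (x:ℂ) / f (x:ℂ) = (x:ℂ) * logDeriv FF (x:ℂ) := by
      rw [logDeriv_apply, hdf, hfx, mul_div_assoc]
    rw [h1, h2, h3, h4, h6, h5, logDeriv_id']
    rw [mul_add, mul_add, Finset.mul_sum]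
    have hx1 : (x:ℂ) * (1/(x:ℂ)) = 1 := by
      field_simp
    rw [hx1]
    congr 1
    congr 1
    rw [Complex.ofReal_sum]
    apply Finset.sum_congr rfl
    intro i hi
    rw [hheadterm i (Finset.mem_range.mp hi)]
  -- real part and conclusion
  have hre : ((x:ℂ) * deriv f (x:ℂ) / f (x:ℂ)).re =
      1 + (∑ i ∈ Finset.range k, x/(x - a (i+1))) + ((x:ℂ) * deriv gL (x:ℂ)).re := by
    rw [hmain]
    simp only [Complex.add_re, Complex.one_re, Complex.ofReal_re]
  have hhead_nonneg : (0:ℝ) ≤ ∑ i ∈ Finset.range k, x/(x - a (i+1)) := by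
    apply Finset.sum_nonneg
    intro i hi
    have h1 := hhead_lt i (Finset.mem_range.mp hi)
    apply div_nonneg (le_of_lt hxpos)
    linarith
  have hterm_ge : ∀ i, -(t i) ≤ x/(x - c i) := fun i =>
    aux_ratio x (a k) (c i) hxpos hxs (hc10 i)
  have htail_ge : -(∑' j, t j) ≤ ((x:ℂ) * deriv gL (x:ℂ)).re := by
    rw [← hsum_tail.tsum_eq, ← tsum_neg]
    exact Summable.tsum_le_tsum hterm_ge hts.neg hsum_tail.summable
  rw [hre]
  linarith
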